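/- Let s ≥ 1, t ≥ 1 and λ ≥ 0 be natural numbers and θ = t·s + λ. Then the sumset {j + s·i : 0 ≤ j ≤ s−1, 0 ≤ i ≤ t−1} + {(s−1−k) + θ·l : 0 ≤ k ≤ s−1, 0 ≤ l ≤ t−1} equals the union of intervals ⋃_{l=0}^{t−1} {n : θ·l ≤ n ≤ θ·l + t·s + s − 2}. -/
import Mathlib


open Pointwise

/-- For s, t ≥ 1, λ ≥ 0 and θ = t·s + λ, the sumset
P_CA + P_CB of the AGE coded supports equals
⋃_{l<t} {n : θ·l ≤ n ≤ θ·l + t·s + s − 2}. -/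
theorem age_coded_sumset (s t lam : ℕ) (hs : 1 ≤ s) (ht : 1 ≤ t) :
    ({n : ℕ | ∃ j i, j < s ∧ i < t ∧ n = j + s * i} +
     {n : ℕ | ∃ k l, k < s ∧ l < t ∧ n = (s - 1 - k) + (t * s + lam) * l})
      = {n : ℕ | ∃ l, l < t ∧ (t * s + lam) * l ≤ n ∧
          n ≤ (t * s + lam) * l + t * s + s - 2} := by
  ext n
  simp only [Set.mem_add, Set.mem_setOf_eq]
  constructor
  · rintro ⟨a, ⟨j, i, hj, hi, rfl⟩, b, ⟨k, l, hk, hl, rfl⟩, rfl⟩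
    refine ⟨l, hl, ?_, ?_⟩ <;>
    · have hsi : s * i + s ≤ s * t := by
        calc s * i + s = s * (i + 1) := by ring
          _ ≤ s * t := Nat.mul_le_mul_left s hi
      have hts : t * s = s * t := Nat.mul_comm t s
      rw [hts]
      generalize s * t = u at hsi ⊢
      generalize (u + lam) * l = b
      generalize s * i = q at hsi ⊢
      omega
  · rintro ⟨l, hl, h1, h2⟩
    have hts : t * s = s * t := Nat.mul_comm t s
    rw [hts] at h1 h2
    set b := (s * t + lam) * l with hb
    set m := n - b with hm
    have hstt : s * (t - 1) + s = s * t := by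
      have : s * (t - 1) + s = s * (t - 1 + 1) := by ring
      rw [this, Nat.sub_add_cancel ht]
    by_cases hcase : m < s * t
    · refine ⟨m % s + s * (m / s), ⟨m % s, m / s, Nat.mod_lt _ hs, ?_, rfl⟩,
        b, ⟨s - 1, l, by omega, hl, ?_⟩, ?_⟩
      · rw [Nat.div_lt_iff_lt_mul hs]
        omega
      · rw [hts]; omega
      · have := Nat.mod_add_div m s
        generalize s * t = u at hcase
        generalize s * (m / s) = q at this ⊢
        omega
    · have hr : s * t ≤ m := le_of_not_gt hcase
      have hub : m ≤ s * t + s - 2 := by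
        generalize s * t = u at hr h2 ⊢
        omega
      refine ⟨(s - 1) + s * (t - 1), ⟨s - 1, t - 1, by omega, by omega, rfl⟩,
        (s - 1 - (s - 1 - (m - (s * t - 1)))) + b,
        ⟨s - 1 - (m - (s * t - 1)), l, by omega, hl, by rw [hts]⟩, ?_⟩
      generalize hq : s * (t - 1) = q at hstt ⊢
      generalize s * t = u at hstt hr hub ⊢
      omega
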